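/- Radon–Nikodym character of a commuting locally compact action: let (X,m,Γ) be an ergodic infinite measure preserving system, and let L be a locally compact group acting measurably and faithfully on (X,m) by measure class preserving transformations commuting with Γ. Then there exists a continuous multiplicative character Δ : L → ℝ₊* such that g_* m = Δ(g)·m for all g ∈ L. -/

import Mathlib

open MeasureTheory

/-- Ergodicity of a group action on a measure space: any invariant measurable set is
null or conull. -/
def SMulErgodic (Γ : Type*) {X : Type*} [SMul Γ X] [MeasurableSpace X]
    (μ : Measure X) : Prop :=
  ∀ s : Set X, MeasurableSet s → (∀ γ : Γ, (fun x => γ • x) ⁻¹' s = s) →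
    μ s = 0 ∨ μ sᶜ = 0

open Filter Set Pointwise Topology

lemma exists_const_smul_of_ergodic
    {Γ X : Type*} [Group Γ] [Countable Γ] [MeasurableSpace X]
    [MulAction Γ X]
    (hmΓ : ∀ γ : Γ, Measurable (fun x : X => γ • x))
    (m : Measure X) [SigmaFinite m] (hinf : m Set.univ = ⊤)
    (hmp : ∀ γ : Γ, m.map (fun x => γ • x) = m)
    (herg : SMulErgodic Γ m)
    (T Tinv : X → X) (hT : Measurable T) (hTinv : Measurable Tinv)
    (hTlinv : ∀ x, Tinv (T x) = x) (hTrinv : ∀ x, T (Tinv x) = x)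
    (hac : m.map T ≪ m) (hac' : m ≪ m.map T)
    (hcommT : ∀ (γ : Γ) (x : X), γ • (T x) = T (γ • x)) :
    ∃ c : NNReal, c ≠ 0 ∧ m.map T = (c : ENNReal) • m := by
  classical
  set e : X ≃ᵐ X := ⟨⟨T, Tinv, hTlinv, hTrinv⟩, hT, hTinv⟩ with he
  set ν : Measure X := m.map T with hν
  have hνe : ν = m.map e := rfl
  haveI : SigmaFinite ν := by rw [hνe]; exact e.sigmaFinite_map
  set f : X → ENNReal := ν.rnDeriv m with hf
  have hfm : Measurable f := Measure.measurable_rnDeriv ν m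
  have hwd : m.withDensity f = ν := Measure.withDensity_rnDeriv_eq ν m hac
  -- invariance of f under Γ
  have hinv : ∀ γ : Γ, (fun x => f (γ • x)) =ᵐ[m] f := by
    intro γ
    set eγ : X ≃ᵐ X := ⟨⟨fun x => γ • x, fun x => γ⁻¹ • x,
      fun x => by simp [smul_smul], fun x => by simp [smul_smul]⟩, hmΓ γ, hmΓ γ⁻¹⟩ with heγ
    have hemb := eγ.measurableEmbedding
    have key := hemb.rnDeriv_map ν m
    have hcoe : ⇑eγ = fun x => γ • x := rfl
    have hmγ : m.map ⇑eγ = m := by rw [hcoe]; exact hmp γ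
    have hνγ : ν.map ⇑eγ = ν := by
      rw [hcoe, hν, Measure.map_map (hmΓ γ) hT]
      have : (fun x => γ • x) ∘ T = T ∘ (fun x => γ • x) := funext fun x => hcommT γ x
      rw [this, ← Measure.map_map hT (hmΓ γ), hmp γ]
    rw [hmγ, hνγ] at key
    exact key
  -- ergodicity dichotomy
  have dich : ∀ r : ENNReal, m {x | f x < r} = 0 ∨ m {x | ¬ f x < r} = 0 := by
    intro r
    set t : Set X := {x | ∀ γ : Γ, f (γ • x) < r} with ht
    have htm : MeasurableSet t := by
      have : t = ⋂ γ : Γ, {x | f (γ • x) < r} := by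
        ext x; simp [ht, Set.mem_iInter]
      rw [this]
      exact MeasurableSet.iInter fun γ =>
        measurableSet_lt (hfm.comp (hmΓ γ)) measurable_const
    have htinv : ∀ δ : Γ, (fun x => δ • x) ⁻¹' t = t := by
      intro δ
      ext x
      simp only [Set.mem_preimage, ht, Set.mem_setOf_eq]
      constructor
      · intro h γ'
        have := h (γ' * δ⁻¹)
        rwa [smul_smul, inv_mul_cancel_right] at this
      · intro h γ'
        rw [smul_smul]
        exact h (γ' * δ)
    have htae : ∀ᵐ x ∂m, x ∈ t ↔ f x < r := by
      have hall : ∀ᵐ x ∂m, ∀ γ : Γ, f (γ • x) = f x := ae_all_iff.2 hinv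
      filter_upwards [hall] with x hx
      constructor
      · intro h
        have := h 1
        rwa [hx 1] at this
      · intro h γ
        rw [hx γ]; exact h
    have h1 : m t = m {x | f x < r} :=
      measure_congr (eventuallyEq_set.2 htae)
    have h2 : m tᶜ = m {x | ¬ f x < r} := by
      refine measure_congr (eventuallyEq_set.2 ?_)
      filter_upwards [htae] with x hx
      simp only [Set.mem_compl_iff, Set.mem_setOf_eq]
      exact not_congr hx
    rcases herg t htm htinv with h | h
    · left; rw [← h1]; exact h
    · right; rw [← h2]; exact h
  have hlt : ∀ᵐ x ∂m, f x < ⊤ := Measure.rnDeriv_lt_top ν m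
  set S : Set ENNReal := {r | m {x | ¬ f x < r} = 0} with hS
  -- S contains a finite element
  have hSne : ∃ n : ℕ, ((n : ENNReal)) ∈ S := by
    by_contra hcon
    push_neg at hcon
    have hz : ∀ n : ℕ, m {x | f x < (n : ENNReal)} = 0 := by
      intro n
      rcases dich (n : ENNReal) with h | h
      · exact h
      · exact absurd h (hcon n)
    have hsub : {x | f x < ⊤} ⊆ ⋃ n : ℕ, {x | f x < (n : ENNReal)} := by
      intro x hx
      obtain ⟨n, hn⟩ := ENNReal.exists_nat_gt hx.ne
      exact Set.mem_iUnion.2 ⟨n, hn⟩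
    have h0 : m {x | f x < ⊤} = 0 :=
      measure_mono_null hsub (measure_iUnion_null hz)
    have h0' : m {x | ¬ f x < ⊤} = 0 := ae_iff.mp hlt
    have : m Set.univ = 0 := by
      have hle : m Set.univ ≤ m {x | f x < ⊤} + m ({x | f x < ⊤}ᶜ) := by
        rw [← Set.union_compl_self {x | f x < ⊤}]
        exact measure_union_le _ _
      have : m ({x | f x < ⊤}ᶜ) = 0 := h0'
      simpa [h0, this] using hle
    rw [hinf] at this
    exact ENNReal.top_ne_zero this
  obtain ⟨n, hnS⟩ := hSne
  set c : ENNReal := sInf S with hc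
  have hctop : c ≠ ⊤ := by
    have : c ≤ (n : ENNReal) := csInf_le (OrderBot.bddBelow S) hnS
    exact (lt_of_le_of_lt this (ENNReal.natCast_lt_top n)).ne
  -- f is a.e. equal to c
  have hflt : m {x | f x < c} = 0 := by
    have hsub : {x | f x < c} ⊆
        ⋃ q : ℚ, {x | f x < Real.toNNReal q ∧ ((Real.toNNReal q : ENNReal)) < c} := by
      intro x hx
      obtain ⟨q, _, hq1, hq2⟩ := ENNReal.lt_iff_exists_rat_btwn.1 hx
      exact Set.mem_iUnion.2 ⟨q, hq1, hq2⟩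
    refine measure_mono_null hsub (measure_iUnion_null fun q => ?_)
    by_cases hqc : ((Real.toNNReal q : ENNReal)) < c
    · have hnotS : ((Real.toNNReal q : ENNReal)) ∉ S := fun hmem =>
        absurd (csInf_le (OrderBot.bddBelow S) hmem) (not_le.2 hqc)
      rcases dich ((Real.toNNReal q : ENNReal)) with h | h
      · exact measure_mono_null (fun x hx => hx.1) h
      · exact absurd h hnotS
    · refine measure_mono_null (fun x hx => absurd hx.2 hqc) measure_empty
  have hfgt : m {x | c < f x} = 0 := by
    have hsub : {x | c < f x} ⊆
        ⋃ q : ℚ, {x | ((Real.toNNReal q : ENNReal)) < f x ∧ c < ((Real.toNNReal q : ENNReal))} := by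
      intro x hx
      obtain ⟨q, _, hq1, hq2⟩ := ENNReal.lt_iff_exists_rat_btwn.1 hx
      exact Set.mem_iUnion.2 ⟨q, hq2, hq1⟩
    refine measure_mono_null hsub (measure_iUnion_null fun q => ?_)
    by_cases hqc : c < ((Real.toNNReal q : ENNReal))
    · obtain ⟨s, hsS, hs⟩ := sInf_lt_iff.1 hqc
      refine measure_mono_null (fun x hx => ?_) hsS
      exact not_lt.2 (le_of_lt (lt_trans hs hx.1))
    · refine measure_mono_null (fun x hx => absurd hx.2 hqc) measure_empty
  have hfc : f =ᵐ[m] fun _ => c := by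
    have hnull : m {x | ¬ f x = c} = 0 := by
      have hsub : {x | ¬ f x = c} ⊆ {x | f x < c} ∪ {x | c < f x} := by
        intro x hx
        rcases lt_or_gt_of_ne hx with h | h
        · exact Or.inl h
        · exact Or.inr h
      exact measure_mono_null hsub (measure_union_null hflt hfgt)
    exact ae_iff.mpr hnull
  have hc0 : c ≠ 0 := by
    intro h0
    have hν0 : ν = 0 := by
      rw [← hwd, withDensity_congr_ae hfc, h0]
      simp
    have hm0 : m Set.univ = 0 := hac' (by simp [hν0])
    rw [hinf] at hm0
    exact ENNReal.top_ne_zero hm0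
  refine ⟨c.toNNReal, ?_, ?_⟩
  · simp [ENNReal.toNNReal_eq_zero_iff, hc0, hctop]
  · rw [ENNReal.coe_toNNReal hctop, ← hwd, withDensity_congr_ae hfc, withDensity_const]

lemma nnreal_hom_continuous
    {L : Type*} [Group L] [TopologicalSpace L] [IsTopologicalGroup L]
    [LocallyCompactSpace L] [SecondCountableTopology L] [T2Space L]
    [MeasurableSpace L] [BorelSpace L]
    (φ : L → NNReal) (hφ : Measurable φ) (h1 : φ 1 = 1)
    (hmul : ∀ g h : L, φ (g * h) = φ g * φ h) (h0 : ∀ g : L, φ g ≠ 0) :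
    Continuous φ := by
  classical
  have hφinv : ∀ g : L, φ g⁻¹ = (φ g)⁻¹ := by
    intro g
    have h : φ g * φ g⁻¹ = 1 := by rw [← hmul, mul_inv_cancel, h1]
    exact (inv_eq_of_mul_eq_one_right h).symm
  -- Steinhaus-type neighborhood claim
  have key : ∀ r : NNReal, 1 < r → {g : L | r⁻¹ < φ g ∧ φ g < r} ∈ 𝓝 (1 : L) := by
    intro r hr
    obtain ⟨K₀⟩ : Nonempty (TopologicalSpace.PositiveCompacts L) := inferInstance
    set μ : Measure L := Measure.haarMeasure K₀ with hμ
    have hr0 : (r : NNReal) ≠ 0 := (lt_trans zero_lt_one hr).ne'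
    have hKpos : 0 < μ (K₀ : Set L) := by
      rw [hμ, Measure.haarMeasure_self]; exact zero_lt_one
    set J : ℤ → Set L := fun k => φ ⁻¹' (Set.Ico (r ^ k) (r ^ (k + 1))) with hJ
    have hcov : (K₀ : Set L) ⊆ ⋃ k : ℤ, ((K₀ : Set L) ∩ J k) := by
      intro g hg
      obtain ⟨k, hk⟩ := exists_mem_Ico_zpow (zero_lt_iff.mpr (h0 g)) hr
      exact Set.mem_iUnion.2 ⟨k, hg, hk⟩
    obtain ⟨k, hk⟩ : ∃ k : ℤ, 0 < μ ((K₀ : Set L) ∩ J k) := by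
      by_contra hcon
      push_neg at hcon
      have : μ (K₀ : Set L) = 0 := by
        refine measure_mono_null hcov (measure_iUnion_null fun k => ?_)
        exact le_antisymm (hcon k) (zero_le)
      exact absurd this hKpos.ne'
    set E : Set L := (K₀ : Set L) ∩ J k with hE
    have hEm : MeasurableSet E :=
      (K₀.isCompact.isClosed.measurableSet).inter (hφ measurableSet_Ico)
    have hsteinhaus := MeasureTheory.Measure.div_mem_nhds_one_of_haar_pos μ E hEm hk
    refine Filter.mem_of_superset hsteinhaus ?_
    rintro x hx
    rw [Set.mem_div] at hx
    obtain ⟨a, ha, b, hb, rfl⟩ := hx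
    have haJ : φ a ∈ Set.Ico (r ^ k) (r ^ (k + 1)) := ha.2
    have hbJ : φ b ∈ Set.Ico (r ^ k) (r ^ (k + 1)) := hb.2
    have hφb0 : φ b ≠ 0 := h0 b
    have hφdiv : φ (a / b) = φ a / φ b := by
      rw [div_eq_mul_inv, hmul, hφinv, div_eq_mul_inv]
    rw [Set.mem_setOf_eq, hφdiv]
    have hrk : r ^ (k + 1) = r * r ^ k := by
      rw [zpow_add_one₀ hr0, mul_comm]
    constructor
    · -- r⁻¹ < φ a / φ b
      rw [lt_div_iff₀ (zero_lt_iff.mpr hφb0)]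
      calc r⁻¹ * φ b < r⁻¹ * r ^ (k + 1) := by
            exact mul_lt_mul_of_pos_left hbJ.2 (by positivity)
        _ = r ^ k := by rw [hrk, ← mul_assoc, inv_mul_cancel₀ hr0, one_mul]
        _ ≤ φ a := haJ.1
    · -- φ a / φ b < r
      rw [div_lt_iff₀ (zero_lt_iff.mpr hφb0)]
      calc φ a < r ^ (k + 1) := haJ.2
        _ = r * r ^ k := hrk
        _ ≤ r * φ b := by exact mul_le_mul_of_nonneg_left hbJ.1 (zero_le)
  -- tendsto at 1
  have tendsto1 : Tendsto φ (𝓝 (1 : L)) (𝓝 (1 : NNReal)) := by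
    rw [← NNReal.tendsto_coe]
    rw [Metric.tendsto_nhds]
    intro ε hε
    set r : NNReal := 1 + ε.toNNReal with hrdef
    have hr : 1 < r := by
      have hpos : 0 < ε.toNNReal := Real.toNNReal_pos.2 hε
      exact lt_add_of_pos_right 1 hpos
    filter_upwards [key r hr] with g hg
    obtain ⟨hg1, hg2⟩ := hg
    have hrR : (r : ℝ) = 1 + ε := by
      simp [hrdef, Real.coe_toNNReal ε hε.le]
    have hgR2 : (φ g : ℝ) < 1 + ε := by
      have := NNReal.coe_lt_coe.2 hg2
      rwa [hrR] at this
    have hgR1 : ((1 : ℝ) + ε)⁻¹ < (φ g : ℝ) := by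
      have := NNReal.coe_lt_coe.2 hg1
      rwa [NNReal.coe_inv, hrR] at this
    rw [NNReal.coe_one, Real.dist_eq, abs_sub_lt_iff]
    constructor
    · linarith
    · have h1ε : (0:ℝ) < 1 + ε := by linarith
      have hinv : ((1:ℝ) + ε) * (1 + ε)⁻¹ = 1 := mul_inv_cancel₀ h1ε.ne'
      nlinarith [hgR1, hε, h1ε]
  -- continuity everywhere
  rw [continuous_iff_continuousAt]
  intro g₀
  have ht1 : Tendsto (fun g => g * g₀⁻¹) (𝓝 g₀) (𝓝 (1 : L)) := by
    have : Continuous (fun g : L => g * g₀⁻¹) := continuous_id.mul continuous_const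
    have h := this.tendsto g₀
    rwa [mul_inv_cancel] at h
  have ht2 : Tendsto (fun g => φ (g * g₀⁻¹)) (𝓝 g₀) (𝓝 (1 : NNReal)) :=
    tendsto1.comp ht1
  have h3 := ht2.mul (tendsto_const_nhds (x := φ g₀))
  rw [one_mul] at h3
  have hfun : ∀ g, φ (g * g₀⁻¹) * φ g₀ = φ g := fun g => by
    rw [← hmul, inv_mul_cancel_right]
  exact h3.congr hfun


/-- Radon–Nikodym character of a commuting locally compact action:
if `Γ` acts ergodically on the infinite (σ-finite) measure space `(X, m)` preserving `m`,
and the locally compact group `L` acts measurably and faithfully on `(X, m)` preserving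
the measure class of `m` and commuting with `Γ`, then there is a continuous multiplicative
character `Δ : L → ℝ₊*` with `g_* m = Δ(g) • m` for all `g ∈ L`. -/
theorem radon_nikodym_character
    {Γ L X : Type*} [Group Γ] [Countable Γ]
    [Group L] [TopologicalSpace L] [IsTopologicalGroup L]
    [LocallyCompactSpace L] [SecondCountableTopology L] [T2Space L]
    [MeasurableSpace L] [BorelSpace L]
    [MeasurableSpace X]
    [MulAction Γ X] [MulAction L X] [FaithfulSMul L X]
    (hmΓ : ∀ γ : Γ, Measurable (fun x : X => γ • x))
    (hmL : Measurable (fun q : L × X => q.1 • q.2))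
    (m : Measure X) [SigmaFinite m] (hinf : m Set.univ = ⊤)
    (hmp : ∀ γ : Γ, m.map (fun x => γ • x) = m)
    (herg : SMulErgodic Γ m)
    (hqi : ∀ g : L, m.map (fun x => g • x) ≪ m ∧ m ≪ m.map (fun x => g • x))
    (hcomm : ∀ (γ : Γ) (g : L) (x : X), γ • (g • x) = g • (γ • x)) :
    ∃ Δ : L → NNReal, Continuous Δ ∧ Δ 1 = 1 ∧
      (∀ g h : L, Δ (g * h) = Δ g * Δ h) ∧ (∀ g : L, Δ g ≠ 0) ∧
      ∀ g : L, m.map (fun x => g • x) = (Δ g) • m := by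
  classical
  have hmg : ∀ g : L, Measurable (fun x : X => g • x) :=
    fun g => hmL.comp measurable_prodMk_left
  have hex : ∀ g : L, ∃ c : NNReal, c ≠ 0 ∧
      m.map (fun x => g • x) = (c : ENNReal) • m := by
    intro g
    exact exists_const_smul_of_ergodic hmΓ m hinf hmp herg
      (fun x => g • x) (fun x => g⁻¹ • x) (hmg g) (hmg g⁻¹)
      (fun x => inv_smul_smul g x) (fun x => smul_inv_smul g x)
      (hqi g).1 (hqi g).2 (fun γ x => hcomm γ g x)
  choose c hc0 hcm using hex
  -- a set of positive finite measure
  obtain ⟨s₀, hs₀m, hs₀0, hs₀top⟩ :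
      ∃ s : Set X, MeasurableSet s ∧ m s ≠ 0 ∧ m s ≠ ⊤ := by
    by_contra hcon
    push_neg at hcon
    have hz : ∀ n : ℕ, m (spanningSets m n) = 0 := by
      intro n
      by_contra hn
      exact absurd (hcon (spanningSets m n) (measurableSet_spanningSets m n) hn)
        (measure_spanningSets_lt_top m n).ne
    have h0 : m Set.univ = 0 := by
      rw [← iUnion_spanningSets m]
      exact measure_iUnion_null hz
    rw [hinf] at h0
    exact ENNReal.top_ne_zero h0
  -- uniqueness of the scaling constant
  have huniq : ∀ a b : NNReal, (a : ENNReal) • m = (b : ENNReal) • m → a = b := by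
    intro a b hab
    have h := congrArg (fun μ : Measure X => μ s₀) hab
    simp only [Measure.smul_apply, smul_eq_mul] at h
    have ha : (a : ENNReal) = (a : ENNReal) * m s₀ / m s₀ :=
      (ENNReal.eq_div_iff hs₀0 hs₀top).2 (mul_comm _ _)
    have hb : (b : ENNReal) = (b : ENNReal) * m s₀ / m s₀ :=
      (ENNReal.eq_div_iff hs₀0 hs₀top).2 (mul_comm _ _)
    have : (a : ENNReal) = (b : ENNReal) := by rw [ha, hb, h]
    exact_mod_cast this
  -- multiplicativity
  have hmulc : ∀ g h : L, c (g * h) = c g * c h := by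
    intro g h
    have hcomp : (fun x : X => (g * h) • x) = (fun x => g • x) ∘ (fun x => h • x) :=
      funext fun x => by rw [Function.comp_apply, ← mul_smul]
    have hmap : m.map (fun x : X => (g * h) • x) = ((c h : ENNReal) * (c g : ENNReal)) • m := by
      rw [hcomp, ← Measure.map_map (hmg g) (hmg h), hcm h, Measure.map_smul, hcm g, smul_smul]
    have key : (c (g * h) : ENNReal) • m = ((c h * c g : NNReal) : ENNReal) • m := by
      rw [ENNReal.coe_mul, ← hmap, ← hcm (g * h)]
    have := huniq _ _ key
    rw [this, mul_comm]
  -- value at 1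
  have hone : c 1 = 1 := by
    refine huniq _ _ ?_
    rw [← hcm 1]
    have hid : (fun x : X => (1 : L) • x) = id := funext fun x => one_smul L x
    rw [hid, Measure.map_id]
    simp
  -- measurability of c
  have hform : ∀ g : L, c g = (m ((fun x => g • x) ⁻¹' s₀) / m s₀).toNNReal := by
    intro g
    have h := congrArg (fun μ : Measure X => μ s₀) (hcm g)
    simp only [Measure.smul_apply, smul_eq_mul] at h
    rw [Measure.map_apply (hmg g) hs₀m] at h
    have hcd : (c g : ENNReal) = m ((fun x => g • x) ⁻¹' s₀) / m s₀ :=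
      (ENNReal.eq_div_iff hs₀0 hs₀top).2 (by rw [mul_comm, ← h])
    rw [← hcd, ENNReal.toNNReal_coe]
  have hmeas : Measurable c := by
    have hceq : c = fun g : L => (m ((fun x => g • x) ⁻¹' s₀) / m s₀).toNNReal :=
      funext hform
    rw [hceq]
    have hTm : MeasurableSet ((fun q : L × X => q.1 • q.2) ⁻¹' s₀) := hmL hs₀m
    have h1 : Measurable fun g : L =>
        m (Prod.mk g ⁻¹' ((fun q : L × X => q.1 • q.2) ⁻¹' s₀)) :=
      measurable_measure_prodMk_left hTm
    exact (h1.div measurable_const).ennreal_toNNReal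
  have hcont : Continuous c := nnreal_hom_continuous c hmeas hone hmulc hc0
  refine ⟨c, hcont, hone, hmulc, hc0, fun g => ?_⟩
  rw [hcm g]
  ext s hs
  simp only [Measure.smul_apply, ENNReal.smul_def]
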